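/- arXiv:1707.01971 — 2 statements merged into one kernel-verified Lean document; each statement's English description precedes it below -/
import Mathlib

section
/- There exists a sequence u : ℕ^n → K with ann(u) = I if and only if Q* is a cyclic Q-module, i.e., there exists λ in Q* with Q* = Q·λ (equivalently, Q is a Gorenstein ring). -/
open MvPolynomial

/-- `⟨u ∣ f⟩ = ∑_m f_m u(m)`, the pairing of a sequence `u : ℕ^n → K`
with a polynomial `f ∈ K[X_1,…,X_n]`. -/
noncomputable def seqBracket {K : Type*} [Field K] {n : ℕ}
    (u : (Fin n →₀ ℕ) → K) (f : MvPolynomial (Fin n) K) : K :=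
  (AddMonoidAlgebra.coeff f).sum fun m c => c * u m

/-- The action of polynomials on sequences: `(f·u)(m) = ⟨u ∣ X^m f⟩`. -/
noncomputable def seqAct {K : Type*} [Field K] {n : ℕ}
    (f : MvPolynomial (Fin n) K) (u : (Fin n →₀ ℕ) → K) : (Fin n →₀ ℕ) → K :=
  fun m => seqBracket u (monomial m 1 * f)

/-- The sequence `u_ℓ(m) = ℓ(X^m mod I)` attached to a linear form `ℓ` on `K[X]/I`. -/
noncomputable def useq {K : Type*} [Field K] {n : ℕ}
    (I : Ideal (MvPolynomial (Fin n) K))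
    (ℓ : Module.Dual K (MvPolynomial (Fin n) K ⧸ I)) : (Fin n →₀ ℕ) → K :=
  fun m => ℓ (Ideal.Quotient.mk I (monomial m 1))

/-- If `u m = L (X^m)` for a linear form `L`, then `⟨u ∣ f⟩ = L f`. -/
lemma seqBracket_eq_L {K : Type*} [Field K] {n : ℕ}
    (L : MvPolynomial (Fin n) K →ₗ[K] K) (f : MvPolynomial (Fin n) K) :
    seqBracket (fun m => L (monomial m 1)) f = L f := by
  conv_rhs => rw [f.as_sum]
  rw [map_sum, seqBracket, Finsupp.sum]
  refine Finset.sum_congr rfl fun m hm => ?_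
  rw [show (monomial m) (coeff m f) = coeff m f • (monomial m 1) by
      rw [smul_monomial, smul_eq_mul, mul_one],
    map_smul, smul_eq_mul]
  rfl

/-- If `L (X^m f) = 0` for all `m`, then `L (h f) = 0` for all polynomials `h`. -/
lemma L_mul_eq_zero {K : Type*} [Field K] {n : ℕ}
    (L : MvPolynomial (Fin n) K →ₗ[K] K) (f : MvPolynomial (Fin n) K)
    (h0 : ∀ m, L (monomial m 1 * f) = 0) (h : MvPolynomial (Fin n) K) :
    L (h * f) = 0 := by
  conv_lhs => rw [h.as_sum, Finset.sum_mul, map_sum]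
  refine Finset.sum_eq_zero fun m hm => ?_
  rw [show (monomial m) (coeff m h) * f = coeff m h • ((monomial m 1) * f) by
      rw [← smul_mul_assoc, smul_monomial, smul_eq_mul, mul_one],
    map_smul, h0, smul_zero]

/-- `⟨u_ℓ ∣ g⟩ = ℓ(g mod I)`. -/
lemma seqBracket_useq {K : Type*} [Field K] {n : ℕ}
    (I : Ideal (MvPolynomial (Fin n) K))
    (ℓ : Module.Dual K (MvPolynomial (Fin n) K ⧸ I)) (g : MvPolynomial (Fin n) K) :
    seqBracket (useq I ℓ) g = ℓ (Ideal.Quotient.mk I g) := by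
  have h : useq I ℓ = fun m =>
      (ℓ.comp (Ideal.Quotient.mkₐ K I).toLinearMap) (monomial m 1) := by
    funext m
    simp [useq, Ideal.Quotient.mkₐ_eq_mk]
  rw [h, seqBracket_eq_L]
  simp [Ideal.Quotient.mkₐ_eq_mk]

/-- Abstract core: if `lam` is a separating linear form on a finite-dimensional
commutative algebra `A`, then every linear form is of the form `lam ∘ (g * ·)`. -/
lemma cyclic_of_sep {K A : Type*} [Field K] [CommRing A] [Algebra K A]
    [FiniteDimensional K A] (lam : Module.Dual K A)
    (hsep : ∀ a : A, (∀ b : A, lam (a * b) = 0) → a = 0) :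
    ∀ φ : Module.Dual K A, ∃ g : A, φ = lam.comp (LinearMap.mulLeft K g) := by
  set T : A →ₗ[K] Module.Dual K A :=
    (LinearMap.llcomp K A A K lam).comp (LinearMap.mul K A) with hT
  have hT_apply : ∀ g h : A, T g h = lam (g * h) := fun g h => rfl
  have hT_eq : ∀ g : A, T g = lam.comp (LinearMap.mulLeft K g) := by
    intro g; ext h; rfl
  have hTinj : Function.Injective T := by
    rw [← LinearMap.ker_eq_bot, LinearMap.ker_eq_bot']
    intro g hg
    refine hsep g fun b => ?_
    have h1 := congrFun (congrArg DFunLike.coe hg) b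
    rw [hT_apply] at h1
    exact h1
  have hTsurj : Function.Surjective T :=
    (LinearMap.injective_iff_surjective_of_finrank_eq_finrank
      (Subspace.dual_finrank_eq (V := A)).symm).mp hTinj
  intro φ
  obtain ⟨g, hg⟩ := hTsurj φ
  exact ⟨g, by rw [← hg, hT_eq]⟩

/-- Forward direction of statement 5. -/
theorem stmt5_fwd {K : Type*} [Field K] {n : ℕ}
    (I : Ideal (MvPolynomial (Fin n) K))
    (hI : FiniteDimensional K (MvPolynomial (Fin n) K ⧸ I))
    (u : (Fin n →₀ ℕ) → K) (hu : ∀ f : MvPolynomial (Fin n) K,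
        seqAct f u = 0 ↔ f ∈ I) :
    (∃ lam : Module.Dual K (MvPolynomial (Fin n) K ⧸ I),
        ∀ φ : Module.Dual K (MvPolynomial (Fin n) K ⧸ I),
          ∃ g : MvPolynomial (Fin n) K ⧸ I,
            φ = lam.comp (LinearMap.mulLeft K g)) := by
  set L : MvPolynomial (Fin n) K →ₗ[K] K := (Finsupp.linearCombination K u).comp
    (AddMonoidAlgebra.coeffLinearEquiv K).toLinearMap with hL
  have hLb : ∀ f, L f = seqBracket u f := fun f => rfl
  have hker : ∀ f ∈ I, L f = 0 := by
    intro f hf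
    have h0 : seqAct f u = 0 := (hu f).mpr hf
    have h1 := congrFun h0 0
    simp only [seqAct, Pi.zero_apply] at h1
    rw [hLb]
    rwa [show (monomial (0 : Fin n →₀ ℕ)) (1 : K) * f = f by
      rw [monomial_zero', C_1, one_mul]] at h1
  set π : MvPolynomial (Fin n) K →ₗ[K] (MvPolynomial (Fin n) K ⧸ I) :=
    (Ideal.Quotient.mkₐ K I).toLinearMap with hπ
  have hπ_apply : ∀ f, π f = Ideal.Quotient.mk I f := by
    intro f; simp [hπ, Ideal.Quotient.mkₐ_eq_mk]
  have hπsurj : LinearMap.range π = ⊤ := by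
    rw [LinearMap.range_eq_top]
    intro q
    obtain ⟨f, rfl⟩ := Ideal.Quotient.mk_surjective q
    exact ⟨f, hπ_apply f⟩
  obtain ⟨s, hs⟩ := π.exists_rightInverse_of_surjective hπsurj
  set lam : Module.Dual K (MvPolynomial (Fin n) K ⧸ I) := L.comp s with hlam
  have lam_mk : ∀ f, lam (Ideal.Quotient.mk I f) = L f := by
    intro f
    have h1 : π (s (Ideal.Quotient.mk I f) - f) = 0 := by
      rw [map_sub, hπ_apply f]
      have h2 := congrFun (congrArg DFunLike.coe hs) (Ideal.Quotient.mk I f)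
      simp only [LinearMap.comp_apply, LinearMap.id_apply] at h2
      rw [h2, sub_self]
    have h2 : s (Ideal.Quotient.mk I f) - f ∈ I := by
      rwa [hπ_apply, Ideal.Quotient.eq_zero_iff_mem] at h1
    have h3 := hker _ h2
    rw [map_sub, sub_eq_zero] at h3
    simpa [hlam] using h3
  refine ⟨lam, cyclic_of_sep lam ?_⟩
  intro g hg
  obtain ⟨f, rfl⟩ := Ideal.Quotient.mk_surjective g
  have hfI : f ∈ I := by
    apply (hu f).mp
    funext m
    have h1 := hg (Ideal.Quotient.mk I (monomial m 1))
    rw [← map_mul, lam_mk, hLb] at h1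
    show seqBracket u (monomial m 1 * f) = 0
    rwa [mul_comm] at h1
  exact (Ideal.Quotient.eq_zero_iff_mem).mpr hfI

/-- Backward direction of statement 5. -/
theorem stmt5_bwd {K : Type*} [Field K] {n : ℕ}
    (I : Ideal (MvPolynomial (Fin n) K))
    (hI : FiniteDimensional K (MvPolynomial (Fin n) K ⧸ I))
    (lam : Module.Dual K (MvPolynomial (Fin n) K ⧸ I))
    (hlam : ∀ φ : Module.Dual K (MvPolynomial (Fin n) K ⧸ I),
          ∃ g : MvPolynomial (Fin n) K ⧸ I,
            φ = lam.comp (LinearMap.mulLeft K g)) :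
    ∃ u : (Fin n →₀ ℕ) → K, ∀ f : MvPolynomial (Fin n) K,
        seqAct f u = 0 ↔ f ∈ I := by
  set Lq : MvPolynomial (Fin n) K →ₗ[K] K :=
    lam.comp (Ideal.Quotient.mkₐ K I).toLinearMap with hLq
  have hLq_apply : ∀ g, Lq g = lam (Ideal.Quotient.mk I g) := by
    intro g; simp [hLq, Ideal.Quotient.mkₐ_eq_mk]
  refine ⟨useq I lam, fun f => ?_⟩
  constructor
  · intro h0
    have h0m : ∀ m : Fin n →₀ ℕ, Lq ((monomial m 1) * f) = 0 := by
      intro m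
      have h1 := congrFun h0 m
      simp only [seqAct, Pi.zero_apply] at h1
      rw [seqBracket_useq] at h1
      rw [hLq_apply]
      exact h1
    rw [← Ideal.Quotient.eq_zero_iff_mem,
      ← Module.forall_dual_apply_eq_zero_iff K]
    intro φ
    obtain ⟨g, rfl⟩ := hlam φ
    obtain ⟨h, rfl⟩ := Ideal.Quotient.mk_surjective g
    have h2 := L_mul_eq_zero Lq f h0m h
    rw [hLq_apply, map_mul] at h2
    simpa [LinearMap.mulLeft_apply] using h2
  · intro hf
    funext m
    show seqBracket (useq I lam) (monomial m 1 * f) = 0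
    rw [seqBracket_useq, map_mul, (Ideal.Quotient.eq_zero_iff_mem).mpr hf,
      mul_zero, map_zero]

/-- There exists a sequence `u : ℕ^n → K` with `ann(u) = I`
if and only if `Q*` is a cyclic `Q`-module: there is `λ ∈ Q*` with
`Q* = Q·λ`, i.e. every `φ ∈ Q*` equals `g·λ` for some `g ∈ Q`
(equivalently, `Q` is Gorenstein). -/
theorem stmt5 {K : Type*} [Field K] {n : ℕ} (hn : 1 ≤ n)
    (I : Ideal (MvPolynomial (Fin n) K))
    (hI : FiniteDimensional K (MvPolynomial (Fin n) K ⧸ I)) :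
    (∃ u : (Fin n →₀ ℕ) → K, ∀ f : MvPolynomial (Fin n) K,
        seqAct f u = 0 ↔ f ∈ I) ↔
    (∃ lam : Module.Dual K (MvPolynomial (Fin n) K ⧸ I),
        ∀ φ : Module.Dual K (MvPolynomial (Fin n) K ⧸ I),
          ∃ g : MvPolynomial (Fin n) K ⧸ I,
            φ = lam.comp (LinearMap.mulLeft K g)) := by
  constructor
  · rintro ⟨u, hu⟩
    exact stmt5_fwd I hI u hu
  · rintro ⟨lam, hlam⟩
    exact stmt5_bwd I hI lam hlam
end

section
/- Let u_1,...,u_t : ℕ^n → K be sequences and suppose their K-linear span V in the space of sequences is stable under the shift operators s_j(u)(m) = u(m + e_j) for j = 1,...,n (equivalently, f·u_i belongs to V for every polynomial f and every i). Then ann(u_1,...,u_t) = ker(u_1,...,u_t), and dim_K K[X_1,...,X_n]/ann(u_1,...,u_t) ≤ t. -/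
open MvPolynomial

lemma seqBracket_monomial {K : Type*} [Field K] {n : ℕ}
    (u : (Fin n →₀ ℕ) → K) (m : Fin n →₀ ℕ) (c : K) :
    seqBracket u (monomial m c) = c * u m := by
  unfold seqBracket
  rw [← single_eq_monomial, AddMonoidAlgebra.coeff_single, Finsupp.sum_single_index (zero_mul (u m))]

lemma seqBracket_add {K : Type*} [Field K] {n : ℕ}
    (u : (Fin n →₀ ℕ) → K) (f g : MvPolynomial (Fin n) K) :
    seqBracket u (f + g) = seqBracket u f + seqBracket u g := by
  unfold seqBracket; rw [AddMonoidAlgebra.coeff_add]; exact Finsupp.sum_add_index' (fun m => zero_mul _) (fun m b c => add_mul b c (u m))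

lemma seqBracket_shift {K : Type*} [Field K] {n : ℕ}
    (u : (Fin n →₀ ℕ) → K) (m : Fin n →₀ ℕ) (f : MvPolynomial (Fin n) K) :
    seqBracket u (monomial m 1 * f) = seqBracket (fun k => u (k + m)) f := by
  induction f using MvPolynomial.induction_on' with
  | monomial k c =>
      rw [monomial_mul, one_mul, seqBracket_monomial, seqBracket_monomial, add_comm]
  | add p q hp hq =>
      rw [mul_add, seqBracket_add, seqBracket_add, hp, hq]

lemma seqAct_monomial {K : Type*} [Field K] {n : ℕ}
    (u : (Fin n →₀ ℕ) → K) (m k : Fin n →₀ ℕ) :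
    seqAct (monomial m 1) u k = u (k + m) := by
  unfold seqAct
  rw [monomial_mul, mul_one, seqBracket_monomial, one_mul]

lemma seqBracket_sum {K : Type*} [Field K] {n t : ℕ} (c : Fin t → K)
    (u : Fin t → (Fin n →₀ ℕ) → K) (f : MvPolynomial (Fin n) K) :
    seqBracket (fun k => ∑ j, c j * u j k) f = ∑ j, c j * seqBracket (u j) f := by
  unfold seqBracket
  simp only [Finsupp.sum, Finset.mul_sum]
  rw [Finset.sum_comm]
  exact Finset.sum_congr rfl fun j _ => Finset.sum_congr rfl fun a _ => by ring

noncomputable def brL {K : Type*} [Field K] {n : ℕ} (u : (Fin n →₀ ℕ) → K) :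
    MvPolynomial (Fin n) K →ₗ[K] K where
  toFun f := seqBracket u f
  map_add' f g := seqBracket_add u f g
  map_smul' c f := by
    simp only [RingHom.id_apply, smul_eq_mul]
    unfold seqBracket
    rw [AddMonoidAlgebra.coeff_smul, Finsupp.sum_smul_index (fun m => zero_mul (u m)), Finsupp.mul_sum]
    exact Finsupp.sum_congr fun m _ => (mul_assoc c _ _)

/-- Let `u_1,…,u_t` be sequences whose `K`-linear span is stable
under the shift operators (equivalently, each `f·u_i` is a `K`-linear combination
of `u_1,…,u_t`). Let `J = ann(u_1,…,u_t)` (given as an ideal). Then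
`ann(u_1,…,u_t) = ker(u_1,…,u_t)` and `dim_K K[X]/J ≤ t`. -/
theorem stmt9 {K : Type*} [Field K] {n : ℕ} (hn : 1 ≤ n) (t : ℕ)
    (u : Fin t → (Fin n →₀ ℕ) → K)
    (hstable : ∀ (f : MvPolynomial (Fin n) K) (i : Fin t),
        ∃ c : Fin t → K, seqAct f (u i) = fun m => ∑ j, c j * u j m)
    (J : Ideal (MvPolynomial (Fin n) K))
    (hJ : ∀ f : MvPolynomial (Fin n) K, f ∈ J ↔ ∀ i, seqAct f (u i) = 0) :
    (∀ f : MvPolynomial (Fin n) K, f ∈ J ↔ ∀ i, seqBracket (u i) f = 0) ∧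
    FiniteDimensional K (MvPolynomial (Fin n) K ⧸ J) ∧
    Module.finrank K (MvPolynomial (Fin n) K ⧸ J) ≤ t := by
  have part1 : ∀ f : MvPolynomial (Fin n) K, f ∈ J ↔ ∀ i, seqBracket (u i) f = 0 := by
    intro f
    constructor
    · intro hf i
      have h0 := congrFun ((hJ f).mp hf i) 0
      simpa [seqAct, monomial_zero', one_mul] using h0
    · intro hf
      refine (hJ f).mpr fun i => funext fun m => ?_
      obtain ⟨c, hc⟩ := hstable (monomial m 1) i
      have key : (fun k => u i (k + m)) = fun k => ∑ j, c j * u j k := by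
        funext k
        rw [← seqAct_monomial (u i) m k]
        exact congrFun hc k
      show seqBracket (u i) (monomial m 1 * f) = 0
      rw [seqBracket_shift, key, seqBracket_sum]
      simp [hf]
  have hkey : FiniteDimensional K (MvPolynomial (Fin n) K ⧸ J) ∧
      Module.finrank K (MvPolynomial (Fin n) K ⧸ J) ≤ t := by
    set L : MvPolynomial (Fin n) K →ₗ[K] (Fin t → K) :=
      LinearMap.pi (fun i => brL (u i)) with hLdef
    have hker : J.restrictScalars K = LinearMap.ker L := by
      ext f
      simp only [Submodule.restrictScalars_mem, LinearMap.mem_ker, hLdef,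
        LinearMap.pi_apply, funext_iff, Pi.zero_apply]
      rw [part1 f]
      exact Iff.rfl
    set φ := (J.restrictScalars K).liftQ L hker.le with hφdef
    have hφ : Function.Injective φ :=
      LinearMap.ker_eq_bot.mp (Submodule.ker_liftQ_eq_bot _ _ _ hker.ge)
    set e := Submodule.Quotient.restrictScalarsEquiv K J with hedef
    set ψ := φ ∘ₗ (e.symm : (MvPolynomial (Fin n) K ⧸ J) →ₗ[K] _) with hψdef
    have hψ : Function.Injective ψ := by
      simp only [hψdef, LinearMap.coe_comp, LinearEquiv.coe_coe]
      exact hφ.comp e.symm.injective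
    haveI : FiniteDimensional K (MvPolynomial (Fin n) K ⧸ J) :=
      FiniteDimensional.of_injective ψ hψ
    refine ⟨inferInstance, ?_⟩
    have h := LinearMap.finrank_le_finrank_of_injective hψ
    rwa [Module.finrank_fin_fun] at h
  exact ⟨part1, hkey.1, hkey.2⟩
end
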